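/- arXiv:0911.2966 — 2 statements merged into one kernel-verified Lean document; each statement's English description precedes it below -/
import Mathlib

section
/- Let G be a finite abelian group with diam^+(G) ≥ 3. Then the maximum cardinality of a generating set A of G with diam_A^+(G) ≥ 3 equals ⌊|G|/2⌋. In particular, if A ⊆ G satisfies |A| > |G|/2, then every element of G is a sum of at most 2 elements of A ∪ {0}. -/
open Pointwise

variable {G : Type*}

/-- The `n`-fold iterated sumset of a set `A` (with `0` summands giving `{0}`). -/
def iterSum [AddCommGroup G] (A : Set G) : ℕ → Set G
  | 0 => {0}
  | n + 1 => iterSum A n + A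

/-- `A` generates `G` as a group. -/
def Spans [AddCommGroup G] (A : Set G) : Prop := AddSubgroup.closure A = ⊤

/-- The positive diameter of `G` with respect to `A`: the least `n` with
`n·(A ∪ {0}) = G`. -/
noncomputable def diamPlus [AddCommGroup G] (A : Set G) : ℕ :=
  sInf {n : ℕ | iterSum (insert 0 A) n = Set.univ}

/-- The positive length of `g` with respect to `A`. -/
noncomputable def lenPlus [AddCommGroup G] (A : Set G) (g : G) : ℕ :=
  sInf {n : ℕ | g ∈ iterSum (insert 0 A) n}

/-- The absolute positive diameter of `G`. -/
noncomputable def diamAbs (G : Type*) [AddCommGroup G] : ℕ :=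
  sSup {d : ℕ | ∃ A : Set G, Spans A ∧ diamPlus A = d}

/-- `A` is aperiodic: its period (stabilizer) is trivial. -/
def Aperiodic [AddCommGroup G] (A : Set G) : Prop :=
  ∀ g : G, A + {g} = A → g = 0

/-- `A` is `ρ`-maximal: maximal under inclusion subject to `(ρ-1)·(A ∪ {0}) ≠ G`. -/
def RhoMax [AddCommGroup G] (ρ : ℕ) (A : Set G) : Prop :=
  iterSum (insert 0 A) (ρ - 1) ≠ Set.univ ∧
    ∀ B : Set G, A ⊆ B → iterSum (insert 0 B) (ρ - 1) ≠ Set.univ → B = A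

/-- A standard generating set of type `m`. -/
def StandardGen [AddCommGroup G] {r : ℕ} (m : Fin r → ℕ) (e : Fin r → G) : Prop :=
  (∀ i, addOrderOf (e i) = m i) ∧
    ∀ g : G, ∃! lam : Fin r → ℕ, (∀ i, lam i < m i) ∧ g = ∑ i, lam i • e i

noncomputable def tInv (ρ : ℕ) (G : Type*) [AddCommGroup G] : ℕ :=
  sSup {k : ℕ | ∃ A : Set G, Aperiodic A ∧ RhoMax ρ A ∧ Spans A ∧ A.ncard = k}

noncomputable def sInv (ρ : ℕ) (G : Type*) [AddCommGroup G] : ℕ :=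
  sSup {k : ℕ | ∃ A : Set G, Spans A ∧ ρ ≤ diamPlus A ∧ A.ncard = k}

section Helpers
variable [AddCommGroup G]

lemma iterSum_zero (S : Set G) : iterSum S 0 = {0} := rfl

lemma iterSum_succ (S : Set G) (n : ℕ) : iterSum S (n + 1) = iterSum S n + S := rfl

lemma iterSum_two (S : Set G) : iterSum S 2 = S + S := by
  have h : iterSum S 2 = ({0} : Set G) + S + S := rfl
  rw [h]
  congr 1
  simp

lemma mem_iterSum_two {S : Set G} {g : G} :
    g ∈ iterSum S 2 ↔ ∃ a ∈ S, ∃ b ∈ S, a + b = g := by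
  rw [iterSum_two, Set.mem_add]

lemma mem_iterSum_add {S : Set G} {x y : G} {m k : ℕ}
    (hx : x ∈ iterSum S m) (hy : y ∈ iterSum S k) : x + y ∈ iterSum S (m + k) := by
  induction k generalizing y with
  | zero =>
    rw [iterSum_zero, Set.mem_singleton_iff] at hy
    subst hy; simpa using hx
  | succ k ih =>
    rw [iterSum_succ, Set.mem_add] at hy
    obtain ⟨u, hu, a, ha, rfl⟩ := hy
    show x + (u + a) ∈ iterSum S (m + k) + S
    exact Set.mem_add.2 ⟨x + u, ih hu, a, ha, by abel⟩

lemma nsmul_mem_iterSum {S : Set G} {x : G} {m : ℕ} (hx : x ∈ iterSum S m) (j : ℕ) :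
    j • x ∈ iterSum S (j * m) := by
  induction j with
  | zero => simp only [zero_smul, Nat.zero_mul, iterSum_zero, Set.mem_singleton_iff]
  | succ j ih =>
    rw [succ_nsmul, Nat.succ_mul]
    exact mem_iterSum_add ih hx

lemma iterSum_mono {S : Set G} (h0 : (0:G) ∈ S) {m n : ℕ} (h : m ≤ n) :
    iterSum S m ⊆ iterSum S n := by
  induction h with
  | refl => exact subset_rfl
  | step _ ih =>
    rename_i n' _
    intro x hx
    exact Set.mem_add.2 ⟨x, ih hx, 0, h0, by simp⟩

lemma exists_iterSum_univ [Finite G] {A : Set G} (hA : Spans A) :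
    ∃ n, iterSum (insert 0 A) n = Set.univ := by
  set S := insert (0:G) A with hS
  have h0 : (0:G) ∈ S := Set.mem_insert _ _
  have key : ∀ g : G, ∃ m, g ∈ iterSum S m := by
    intro g
    have hg : g ∈ AddSubgroup.closure A := by rw [hA]; trivial
    induction hg using AddSubgroup.closure_induction with
    | mem a ha =>
      refine ⟨1, ?_⟩
      show a ∈ iterSum S 0 + S
      exact Set.mem_add.2 ⟨0, rfl, a, Set.mem_insert_of_mem _ ha, by simp⟩
    | zero => exact ⟨0, rfl⟩
    | add x y hx hy ihx ihy =>
      obtain ⟨m, hm⟩ := ihx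
      obtain ⟨k, hk⟩ := ihy
      exact ⟨m + k, mem_iterSum_add hm hk⟩
    | neg x hx ihx =>
      obtain ⟨m, hm⟩ := ihx
      have ho : 0 < addOrderOf x := addOrderOf_pos x
      have hneg : (addOrderOf x - 1) • x = -x := by
        have h1 : (addOrderOf x - 1) • x + x = 0 := by
          rw [← succ_nsmul, Nat.sub_add_cancel ho]
          exact addOrderOf_nsmul_eq_zero x
        linear_combination (norm := abel) h1
      exact ⟨(addOrderOf x - 1) * m, hneg ▸ nsmul_mem_iterSum hm _⟩
  choose f hf using key
  cases nonempty_fintype G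
  exact ⟨Finset.univ.sup f, Set.eq_univ_of_forall fun g =>
    iterSum_mono h0 (Finset.le_sup (Finset.mem_univ g)) (hf g)⟩

lemma diamPlus_le_two {A : Set G} (h : iterSum (insert 0 A) 2 = Set.univ) :
    diamPlus A ≤ 2 :=
  Nat.sInf_le h

lemma three_le_diamPlus [Finite G] {A : Set G} (hA : Spans A)
    (h2 : iterSum (insert 0 A) 2 ≠ Set.univ) : 3 ≤ diamPlus A := by
  obtain ⟨n, hn⟩ := exists_iterSum_univ hA
  refine le_csInf ⟨n, hn⟩ ?_
  intro k hk
  by_contra hlt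
  push_neg at hlt
  apply h2
  apply Set.eq_univ_of_univ_subset
  calc Set.univ = iterSum (insert 0 A) k := hk.symm
    _ ⊆ iterSum (insert 0 A) 2 := iterSum_mono (Set.mem_insert _ _) (by omega)

lemma iterSum_two_univ_of_large [Finite G] (A : Set G) (h : Nat.card G < 2 * A.ncard) :
    iterSum (insert 0 A) 2 = Set.univ := by
  apply Set.eq_univ_of_forall
  intro g
  have hinj : Function.Injective (fun a : G => g - a) := sub_right_injective
  have hne : (A ∩ (fun a : G => g - a) '' A).Nonempty := by
    rw [Set.nonempty_iff_ne_empty]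
    intro hd
    have hdisj : Disjoint A ((fun a : G => g - a) '' A) :=
      Set.disjoint_iff_inter_eq_empty.2 hd
    have h1 := Set.ncard_union_eq hdisj (Set.toFinite _) (Set.toFinite _)
    have h2 : (A ∪ (fun a : G => g - a) '' A).ncard ≤ Nat.card G := by
      rw [← Set.ncard_univ]
      exact Set.ncard_le_ncard (Set.subset_univ _) (Set.toFinite _)
    have h3 := Set.ncard_image_of_injective A hinj
    omega
  obtain ⟨a, haA, b, hbA, hb⟩ := hne
  rw [mem_iterSum_two]
  refine ⟨a, Set.mem_insert_of_mem _ haA, b, Set.mem_insert_of_mem _ hbA, ?_⟩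
  have hb' : g - b = a := hb
  rw [← hb']; abel

lemma ncard_le_half [Finite G] {B : Set G} {g : G}
    (hg : g ∉ iterSum (insert 0 B) 2) : 2 * B.ncard ≤ Nat.card G := by
  by_contra hc
  push_neg at hc
  exact hg ((iterSum_two_univ_of_large B hc) ▸ Set.mem_univ g)

end Helpers

section Maximal
variable [AddCommGroup G] [Finite G]

lemma maximal_cover {B : Set G} {g : G}
    (hmax : Maximal (fun C : Set G => g ∉ iterSum (insert 0 C) 2) B) (x : G) :
    x ∈ B ∨ (∃ a ∈ insert (0:G) B, a + x = g) ∨ x + x = g := by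
  by_cases hx : x ∈ B
  · exact Or.inl hx
  right
  have hins : g ∈ iterSum (insert 0 (insert x B)) 2 := by
    by_contra hcon
    exact hx ((hmax.2 hcon (Set.subset_insert x B)) (Set.mem_insert x B))
  rw [mem_iterSum_two] at hins
  obtain ⟨u, hu, v, hv, huv⟩ := hins
  have hB2 : ∀ a ∈ insert (0:G) B, ∀ b ∈ insert (0:G) B, a + b ≠ g := by
    intro a ha b hb hab
    exact hmax.1 (mem_iterSum_two.2 ⟨a, ha, b, hb, hab⟩)
  have hcase : ∀ w ∈ insert (0:G) (insert x B), w = x ∨ w ∈ insert (0:G) B := by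
    intro w hw
    rcases Set.mem_insert_iff.1 hw with rfl | hw'
    · exact Or.inr (Set.mem_insert _ _)
    rcases Set.mem_insert_iff.1 hw' with rfl | hw''
    · exact Or.inl rfl
    · exact Or.inr (Set.mem_insert_of_mem _ hw'')
  rcases hcase u hu with rfl | hu'
  · rcases hcase v hv with rfl | hv'
    · exact Or.inr huv
    · exact Or.inl ⟨v, hv', by rw [← huv]; abel⟩
  · rcases hcase v hv with rfl | hv'
    · exact Or.inl ⟨u, hu', huv⟩
    · exact absurd huv (hB2 u hu' v hv')

lemma card_bound {B : Set G} {g : G}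
    (hmax : Maximal (fun C : Set G => g ∉ iterSum (insert 0 C) 2) B) :
    Nat.card G ≤ 2 * B.ncard + 1 + {x : G | x + x = g}.ncard := by
  set T := {x : G | x + x = g} with hT
  set D := (fun a : G => g - a) '' (insert 0 B) with hD
  have hcover : (Set.univ : Set G) ⊆ B ∪ D ∪ T := by
    intro x _
    rcases maximal_cover hmax x with h | ⟨a, ha, hax⟩ | h
    · exact Or.inl (Or.inl h)
    · exact Or.inl (Or.inr ⟨a, ha, by show g - a = x; rw [← hax]; abel⟩)
    · exact Or.inr h
  have hDcard : D.ncard ≤ B.ncard + 1 := by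
    rw [hD, Set.ncard_image_of_injective _ sub_right_injective]
    exact Set.ncard_insert_le _ _
  have h1 : Nat.card G ≤ (B ∪ D ∪ T).ncard := by
    rw [← Set.ncard_univ]
    exact Set.ncard_le_ncard hcover (Set.toFinite _)
  have h2 := Set.ncard_union_le (B ∪ D) T
  have h3 := Set.ncard_union_le B D
  omega

lemma spans_of_subset {A B : Set G} (hAB : A ⊆ B) (hA : Spans A) : Spans B := by
  unfold Spans at *
  rw [eq_top_iff, ← hA]
  exact AddSubgroup.closure_mono hAB

/-- A proper divisor is at most half. -/
lemma proper_divisor_le {d n : ℕ} (hpos : 0 < n) (hdvd : d ∣ n) (hne : d ≠ n) :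
    2 * d ≤ n := by
  obtain ⟨k, hk⟩ := hdvd
  have hk0 : k ≠ 0 := by rintro rfl; omega
  have hk1 : k ≠ 1 := by rintro rfl; omega
  have hk2 : 2 ≤ k := by omega
  calc 2 * d ≤ k * d := Nat.mul_le_mul_right d hk2
    _ = n := by rw [hk, mul_comm]

lemma card_top_eq : Nat.card (⊤ : AddSubgroup G) = Nat.card G :=
  Nat.card_congr AddSubgroup.topEquiv.toEquiv

lemma card_subgroup_dvd (H : AddSubgroup G) : Nat.card H ∣ Nat.card G := by
  have := AddSubgroup.card_dvd_of_le (le_top : H ≤ ⊤)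
  rwa [card_top_eq] at this

lemma subgroup_eq_top_of_half_lt {H : AddSubgroup G} (h : Nat.card G / 2 < Nat.card H) :
    H = ⊤ := by
  have hpos : 0 < Nat.card G := Nat.card_pos
  have hdvd := card_subgroup_dvd H
  by_contra hne
  have hlt : Nat.card H ≠ Nat.card G := by
    intro he
    exact hne (AddSubgroup.eq_top_of_card_eq H he)
  have := proper_divisor_le hpos hdvd hlt
  omega

end Maximal

section Small
variable [AddCommGroup G] [Finite G]

lemma exists_mem_notin {A₀ : Set G} (hA₀ : Spans A₀) (K : AddSubgroup G) (hK : K ≠ ⊤) :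
    ∃ a ∈ A₀, a ∉ K := by
  by_contra hc
  push_neg at hc
  apply hK
  rw [eq_top_iff, ← hA₀]
  exact (AddSubgroup.closure_le K).2 hc

lemma not_card_eq_two {A₀ : Set G} (hA₀ : Spans A₀)
    (h2 : iterSum (insert (0:G) A₀) 2 ≠ Set.univ) : Nat.card G ≠ 2 := by
  intro hcard
  have hnt : Nontrivial G := Finite.one_lt_card_iff_nontrivial.1 (by omega)
  obtain ⟨a, haA, ha0'⟩ := exists_mem_notin hA₀ ⊥ bot_ne_top
  have ha0 : a ≠ 0 := by simpa [AddSubgroup.mem_bot] using ha0'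
  have hsub2 : ({0, a} : Set G) ⊆ iterSum (insert 0 A₀) 2 := by
    intro x hx
    rw [mem_iterSum_two]
    rcases hx with rfl | hx
    · exact ⟨0, Set.mem_insert _ _, 0, Set.mem_insert _ _, by simp⟩
    · rw [Set.mem_singleton_iff] at hx; subst hx
      exact ⟨0, Set.mem_insert _ _, x, Set.mem_insert_of_mem _ haA, by simp⟩
  have hcard2 : ({0, a} : Set G).ncard = 2 := by
    rw [Set.ncard_insert_of_notMem (by simpa using ha0.symm), Set.ncard_singleton]
  have heq : ({0, a} : Set G) = Set.univ :=
    Set.eq_of_subset_of_ncard_le (Set.subset_univ _)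
      (by rw [Set.ncard_univ, hcard, hcard2]) (Set.toFinite _)
  exact h2 (Set.eq_univ_of_univ_subset (heq ▸ hsub2))

lemma addOrderOf_dvd_card' (x : G) : addOrderOf x ∣ Nat.card G := by
  have := card_subgroup_dvd (AddSubgroup.zmultiples x)
  rwa [Nat.card_zmultiples] at this

lemma exists_order_four {A₀ : Set G} (hA₀ : Spans A₀)
    (h2 : iterSum (insert (0:G) A₀) 2 ≠ Set.univ) (hcard : Nat.card G = 4) :
    ∃ x : G, addOrderOf x = 4 := by
  by_contra hc
  push_neg at hc
  have hexp : ∀ x : G, x + x = 0 := by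
    intro x
    have hdvd : addOrderOf x ∣ 4 := hcard ▸ addOrderOf_dvd_card' x
    have hmem : addOrderOf x ∈ Nat.divisors 4 := Nat.mem_divisors.2 ⟨hdvd, by norm_num⟩
    have hdiv : Nat.divisors 4 = {1, 2, 4} := by decide
    rw [hdiv] at hmem
    simp only [Finset.mem_insert, Finset.mem_singleton] at hmem
    rcases hmem with h1 | h1 | h1
    · have : x = 0 := AddMonoid.addOrderOf_eq_one_iff.1 h1
      rw [this, add_zero]
    · have := addOrderOf_nsmul_eq_zero x
      rw [h1, two_nsmul] at this
      exact this
    · exact absurd h1 (hc x)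
  rcases Set.subsingleton_or_nontrivial (A₀ \ {0}) with hss | hnt
  · exfalso
    obtain ⟨a, hsub⟩ : ∃ a : G, A₀ ⊆ insert 0 {a} := by
      rcases hss.eq_empty_or_singleton with he | ⟨a, ha⟩
      · refine ⟨0, fun x hx => ?_⟩
        by_cases h : x = 0
        · exact h ▸ Set.mem_insert _ _
        · exfalso
          have hmem : x ∈ A₀ \ {0} := ⟨hx, h⟩
          rw [he] at hmem
          exact hmem
      · refine ⟨a, fun x hx => ?_⟩
        by_cases h : x = 0
        · exact h ▸ Set.mem_insert _ _
        · exact Set.mem_insert_of_mem _ (ha ▸ (⟨hx, h⟩ : x ∈ A₀ \ {0}))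
    have hle : (⊤ : AddSubgroup G) ≤ AddSubgroup.zmultiples a := by
      rw [← hA₀]
      apply (AddSubgroup.closure_le _).2
      intro x hx
      rcases hsub hx with rfl | hx'
      · exact zero_mem _
      · rw [Set.mem_singleton_iff] at hx'; subst hx'
        exact AddSubgroup.mem_zmultiples x
    have hdvd := AddSubgroup.card_dvd_of_le hle
    rw [card_top_eq, Nat.card_zmultiples] at hdvd
    have hle2 : addOrderOf a ≤ 2 :=
      Nat.le_of_dvd two_pos
        (addOrderOf_dvd_of_nsmul_eq_zero (by rw [two_nsmul]; exact hexp a))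
    have hge : Nat.card G ≤ addOrderOf a := Nat.le_of_dvd (addOrderOf_pos a) hdvd
    omega
  · obtain ⟨a, ha, b, hb, hab⟩ := hnt
    have ha0 : a ≠ 0 := ha.2
    have hb0 : b ≠ 0 := hb.2
    have hnegself : ∀ x : G, -x = x := by
      intro x
      have := hexp x
      linear_combination (norm := abel) -this
    set S := ({0, a, b, a + b} : Set G) with hS
    have hsubS : S ⊆ iterSum (insert 0 A₀) 2 := by
      intro x hx
      rw [mem_iterSum_two]
      rcases hx with rfl | hx
      · exact ⟨0, Set.mem_insert _ _, 0, Set.mem_insert _ _, by simp⟩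
      rcases hx with rfl | hx
      · exact ⟨0, Set.mem_insert _ _, x, Set.mem_insert_of_mem _ ha.1, by simp⟩
      rcases hx with rfl | hx
      · exact ⟨0, Set.mem_insert _ _, x, Set.mem_insert_of_mem _ hb.1, by simp⟩
      rw [Set.mem_singleton_iff] at hx; subst hx
      exact ⟨a, Set.mem_insert_of_mem _ ha.1, b, Set.mem_insert_of_mem _ hb.1, rfl⟩
    have hab0 : a + b ≠ 0 := by
      intro h
      have : b = -a := by linear_combination (norm := abel) h
      rw [hnegself] at this
      exact hab this.symm
    have haba : a + b ≠ a := fun h => hb0 (by linear_combination (norm := abel) h)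
    have habb : a + b ≠ b := fun h => ha0 (by linear_combination (norm := abel) h)
    have hd : S.ncard = 4 := by
      rw [hS, Set.ncard_insert_of_notMem (by simp [ha0.symm, hb0.symm, hab0.symm]),
        Set.ncard_insert_of_notMem (by simp [hab, haba.symm]),
        Set.ncard_insert_of_notMem (by simp [habb.symm]), Set.ncard_singleton]
    have heq : S = Set.univ :=
      Set.eq_of_subset_of_ncard_le (Set.subset_univ _)
        (by rw [Set.ncard_univ, hcard, hd]) (Set.toFinite _)
    exact h2 (Set.eq_univ_of_univ_subset (heq ▸ hsubS))

lemma quad_case (hcard : Nat.card G = 4) {x : G} (hx : addOrderOf x = 4) :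
    ∃ B : Set G, Spans B ∧ 3 ≤ diamPlus B ∧ B.ncard = Nat.card G / 2 := by
  set C := ({0, x} : Set G) with hC
  have hx0 : x ≠ 0 := by
    intro h
    rw [h, addOrderOf_zero] at hx
    omega
  have hCspan : Spans C := by
    show AddSubgroup.closure C = ⊤
    apply AddSubgroup.eq_top_of_card_eq
    rw [hcard]
    have hd1 : Nat.card (AddSubgroup.closure C) ∣ 4 :=
      hcard ▸ card_subgroup_dvd _
    have hd2 : (4:ℕ) ∣ Nat.card (AddSubgroup.closure C) := by
      have hle : AddSubgroup.zmultiples x ≤ AddSubgroup.closure C := by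
        rw [AddSubgroup.zmultiples_le]
        exact AddSubgroup.subset_closure (Set.mem_insert_of_mem _ rfl)
      have := AddSubgroup.card_dvd_of_le hle
      rwa [Nat.card_zmultiples, hx] at this
    exact Nat.dvd_antisymm hd1 hd2
  have havoid : iterSum (insert 0 C) 2 ≠ Set.univ := by
    intro hu
    have hsub : iterSum (insert 0 C) 2 ⊆ ({0, x, x + x} : Set G) := by
      rw [iterSum_two]
      rintro y hy
      rw [Set.mem_add] at hy
      obtain ⟨u, hu', v, hv', rfl⟩ := hy
      have hmem : ∀ w ∈ insert (0:G) C, w = 0 ∨ w = x := by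
        intro w hw
        rcases hw with rfl | hw
        · exact Or.inl rfl
        rcases hw with rfl | hw
        · exact Or.inl rfl
        · exact Or.inr hw
      rcases hmem u hu' with rfl | rfl <;> rcases hmem v hv' with rfl | rfl <;> simp
    have hle := Set.ncard_le_ncard hsub (Set.toFinite _)
    rw [hu, Set.ncard_univ, hcard] at hle
    have h1 := Set.ncard_insert_le (0:G) ({x, x + x} : Set G)
    have h2 := Set.ncard_insert_le x ({x + x} : Set G)
    have h3 := Set.ncard_singleton (x + x)
    omega
  refine ⟨C, hCspan, three_le_diamPlus hCspan havoid, ?_⟩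
  rw [hC, Set.ncard_insert_of_notMem (by simpa using hx0.symm), Set.ncard_singleton, hcard]

end Small

section Main
variable [AddCommGroup G] [Finite G]

lemma ncard_coe (H : AddSubgroup G) : (H : Set G).ncard = Nat.card H :=
  (Nat.card_coe_set_eq _).symm

lemma exists_good {A₀ : Set G} (hA₀ : Spans A₀)
    (h2 : iterSum (insert (0:G) A₀) 2 ≠ Set.univ) :
    ∃ B : Set G, Spans B ∧ 3 ≤ diamPlus B ∧ B.ncard = Nat.card G / 2 := by
  have hNE : Nonempty G := ⟨0⟩
  have hpos : 0 < Nat.card G := Nat.card_pos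
  rcases Nat.even_or_odd (Nat.card G) with heven | hodd
  · -- even case
    obtain ⟨g, hg⟩ : ∃ g : G, ∀ x : G, x + x ≠ g := by
      cases nonempty_fintype G
      haveI : Fact (Nat.Prime 2) := ⟨Nat.prime_two⟩
      have h2dvd : 2 ∣ Fintype.card G := by
        rw [← Nat.card_eq_fintype_card]; exact heven.two_dvd
      obtain ⟨y, hy⟩ := exists_prime_addOrderOf_dvd_card 2 h2dvd
      have hy0 : y ≠ 0 := by
        intro h; rw [h, addOrderOf_zero] at hy; omega
      have hyy : y + y = 0 := by
        have := addOrderOf_nsmul_eq_zero y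
        rwa [hy, two_nsmul] at this
      have hni : ¬ Function.Injective (fun x : G => x + x) := by
        intro hi
        exact hy0 (hi (show y + y = 0 + 0 by rw [hyy, add_zero]))
      have hns : ¬ Function.Surjective (fun x : G => x + x) :=
        fun hs => hni (Finite.injective_iff_surjective.2 hs)
      rw [Function.Surjective] at hns
      push_neg at hns
      obtain ⟨g, hgs⟩ := hns
      exact ⟨g, fun x => hgs x⟩
    have hg0 : g ≠ 0 := fun h => hg 0 (by simp [h])
    have hgstart : g ∉ iterSum (insert (0:G) (∅ : Set G)) 2 := by
      rw [mem_iterSum_two]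
      rintro ⟨a, ha, b, hb, hab⟩
      rcases Set.mem_insert_iff.1 ha with rfl | ha'
      · rcases Set.mem_insert_iff.1 hb with rfl | hb'
        · rw [add_zero] at hab
          exact hg0 hab.symm
        · exact Set.notMem_empty _ hb'
      · exact Set.notMem_empty _ ha'
    obtain ⟨B, -, hBmax⟩ := Finite.exists_le_maximal
      (p := fun C : Set G => g ∉ iterSum (insert 0 C) 2) hgstart
    have hT : {x : G | x + x = g} = ∅ := by
      ext x; simp [hg x]
    have hb1 := card_bound hBmax
    rw [hT, Set.ncard_empty] at hb1
    have hb2 := ncard_le_half hBmax.1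
    obtain ⟨m, hm⟩ := heven
    have hBcard : B.ncard = Nat.card G / 2 := by omega
    by_cases hs : Spans B
    · exact ⟨B, hs, three_le_diamPlus hs (fun hu => hBmax.1 (hu ▸ Set.mem_univ g)), hBcard⟩
    set H := AddSubgroup.closure B with hH
    have hBH : B ⊆ (H : Set G) := AddSubgroup.subset_closure
    have hHne : H ≠ ⊤ := hs
    have hHlt : Nat.card H < Nat.card G := by
      have hne : (H : Set G) ≠ Set.univ := by
        intro h
        exact hHne (by rwa [← AddSubgroup.coe_eq_univ])
      have hss : (H : Set G) ⊂ Set.univ := Set.ssubset_univ_iff.2 hne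
      have h1 := Set.ncard_lt_ncard hss (Set.toFinite _)
      rw [Set.ncard_univ] at h1
      have e := ncard_coe H
      omega
    have hdvd : Nat.card H ∣ Nat.card G := card_subgroup_dvd H
    have hHge : Nat.card G / 2 ≤ Nat.card H := by
      have h1 : B.ncard ≤ (H : Set G).ncard := Set.ncard_le_ncard hBH (Set.toFinite _)
      have e := ncard_coe H
      omega
    have hHhalf : Nat.card H = Nat.card G / 2 := by
      have := proper_divisor_le hpos hdvd (by omega)
      omega
    have hBeq : B = (H : Set G) := by
      apply Set.eq_of_subset_of_ncard_le hBH _ (Set.toFinite _)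
      have e := ncard_coe H
      omega
    have hgH : g ∉ (H : Set G) := by
      intro hgh
      apply hBmax.1
      rw [mem_iterSum_two]
      exact ⟨g, Set.mem_insert_of_mem _ (hBeq ▸ hgh), 0, Set.mem_insert _ _, add_zero g⟩
    by_cases h3 : 3 ≤ Nat.card G / 2
    · -- swap construction
      obtain ⟨x₀, hx₀B, hx₀0⟩ : ∃ x₀ ∈ B, x₀ ≠ (0:G) := by
        have h1 : 1 < B.ncard := by omega
        rw [Set.one_lt_ncard_iff (Set.toFinite _)] at h1
        obtain ⟨a, b, ha, hb, hab⟩ := h1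
        by_cases h : a = 0
        · exact ⟨b, hb, fun hb0 => hab (h.trans hb0.symm)⟩
        · exact ⟨a, ha, h⟩
      set C := insert (g - x₀) (B \ {x₀}) with hC
      have hx₀H : x₀ ∈ (H : Set G) := hBeq ▸ hx₀B
      have hgx₀H : g - x₀ ∉ (H : Set G) := by
        intro hmem
        apply hgH
        have : (g - x₀) + x₀ ∈ H := AddSubgroup.add_mem H hmem hx₀H
        simpa using this
      have hmemC : ∀ w ∈ insert (0:G) C, w = g - x₀ ∨ (w ∈ insert (0:G) B ∧ w ≠ x₀) := by
        intro w hw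
        rcases hw with rfl | hw
        · exact Or.inr ⟨Set.mem_insert _ _, fun h => hx₀0 h.symm⟩
        rcases hw with rfl | hw
        · exact Or.inl rfl
        · exact Or.inr ⟨Set.mem_insert_of_mem _ hw.1, fun h => hw.2 (by simp [h])⟩
      have hCavoid : g ∉ iterSum (insert 0 C) 2 := by
        rw [mem_iterSum_two]
        rintro ⟨u, hu, v, hv, huv⟩
        have hBavoid : ∀ a ∈ insert (0:G) B, ∀ b ∈ insert (0:G) B, a + b ≠ g := by
          intro a ha b hb hab
          exact hBmax.1 (mem_iterSum_two.2 ⟨a, ha, b, hb, hab⟩)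
        rcases hmemC u hu with rfl | ⟨hu', hux⟩
        · rcases hmemC v hv with rfl | ⟨hv', hvx⟩
          · -- (g-x₀)+(g-x₀) = g : then 2(g-x₀)=g contradicts hg
            exact hg (g - x₀) huv
          · -- (g-x₀) + v = g ⟹ v = x₀
            apply hvx
            linear_combination (norm := abel) huv
        · rcases hmemC v hv with rfl | ⟨hv', hvx⟩
          · apply hux
            linear_combination (norm := abel) huv
          · exact hBavoid u hu' v hv' huv
      have hCspan : Spans C := by
        show AddSubgroup.closure C = ⊤
        apply subgroup_eq_top_of_half_lt
        -- closure C ⊇ H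
        have hdiff : (H : Set G) \ {x₀} ⊆ C := by
          intro y hy
          rw [hC]
          exact Set.mem_insert_of_mem _ (by rw [← hBeq] at hy; exact hy)
        have hHsubK : (H : Set G) ⊆ (AddSubgroup.closure C : Set G) := by
          -- H is generated by H \ {x₀} since |H| ≥ 3
          have hKle : AddSubgroup.closure ((H : Set G) \ {x₀}) ≤ H := by
            apply (AddSubgroup.closure_le _).2
            exact Set.diff_subset
          set K := AddSubgroup.closure ((H : Set G) \ {x₀}) with hK
          have hKcard : Nat.card H - 1 ≤ Nat.card K := by
            have h1 : ((H : Set G) \ {x₀}).ncard ≤ (K : Set G).ncard :=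
              Set.ncard_le_ncard AddSubgroup.subset_closure (Set.toFinite _)
            have h2 : ((H : Set G) \ {x₀}).ncard = (H : Set G).ncard - 1 :=
              Set.ncard_diff_singleton_of_mem hx₀H
            have e1 := ncard_coe H
            have e2 := ncard_coe K
            omega
          have hKdvd : Nat.card K ∣ Nat.card H := AddSubgroup.card_dvd_of_le hKle
          have hKH : Nat.card K = Nat.card H := by
            by_contra hne
            have := proper_divisor_le (by omega : 0 < Nat.card H) hKdvd hne
            omega
          have hKeq : (K : Set G) = (H : Set G) := by
            apply Set.eq_of_subset_of_ncard_le hKle _ (Set.toFinite _)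
            have e1 := ncard_coe H
            have e2 := ncard_coe K
            omega
          calc (H : Set G) = (K : Set G) := hKeq.symm
            _ ⊆ (AddSubgroup.closure C : Set G) :=
                SetLike.coe_subset_coe.2 (AddSubgroup.closure_mono hdiff)
        have hgx₀K : g - x₀ ∈ AddSubgroup.closure C :=
          AddSubgroup.subset_closure (Set.mem_insert _ _)
        have hss : (H : Set G) ⊂ (AddSubgroup.closure C : Set G) :=
          ⟨hHsubK, fun hsub => hgx₀H (hsub hgx₀K)⟩
        have h4 := Set.ncard_lt_ncard hss (Set.toFinite _)
        have e1 := ncard_coe H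
        have e2 := ncard_coe (AddSubgroup.closure C)
        omega
      have hCcard : C.ncard = Nat.card G / 2 := by
        have hnotmem : g - x₀ ∉ B \ {x₀} := by
          intro hmem
          exact hgx₀H (hBeq ▸ hmem.1)
        rw [hC, Set.ncard_insert_of_notMem hnotmem (Set.toFinite _),
          Set.ncard_diff_singleton_of_mem hx₀B]
        omega
      exact ⟨C, hCspan,
        three_le_diamPlus hCspan (fun hu => hCavoid (hu ▸ Set.mem_univ g)), hCcard⟩
    · -- small even case : card G = 2 or 4
      push_neg at h3
      have hne2 := not_card_eq_two hA₀ h2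
      have hcard4 : Nat.card G = 4 := by omega
      obtain ⟨x, hx⟩ := exists_order_four hA₀ h2 hcard4
      exact quad_case hcard4 hx
  · -- odd case
    obtain ⟨g, hg⟩ : ∃ g : G, g ∉ iterSum (insert 0 A₀) 2 := by
      by_contra hc
      push_neg at hc
      exact h2 (Set.eq_univ_of_forall hc)
    obtain ⟨B, hA₀B, hBmax⟩ := Finite.exists_le_maximal
      (p := fun C : Set G => g ∉ iterSum (insert 0 C) 2) hg
    have hTcard : {x : G | x + x = g}.ncard ≤ 1 := by
      rw [Set.ncard_le_one (Set.toFinite _)]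
      intro a ha b hb
      have hab : a + a = b + b := by
        rw [Set.mem_setOf_eq] at ha hb
        rw [ha, hb]
      have hd2 : (a - b) + (a - b) = 0 := by linear_combination (norm := abel) hab
      have hdvd2 : addOrderOf (a - b) ∣ 2 :=
        addOrderOf_dvd_of_nsmul_eq_zero (by rwa [two_nsmul])
      have hdvdn : addOrderOf (a - b) ∣ Nat.card G := addOrderOf_dvd_card' _
      have hord : addOrderOf (a - b) = 1 := by
        obtain ⟨m, hm⟩ := hodd
        rcases (Nat.dvd_prime Nat.prime_two).1 hdvd2 with h1 | h1
        · exact h1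
        · exfalso
          rw [h1] at hdvdn
          omega
      have : a - b = 0 := AddMonoid.addOrderOf_eq_one_iff.1 hord
      linear_combination (norm := abel) this
    have hb1 := card_bound hBmax
    have hb2 := ncard_le_half hBmax.1
    obtain ⟨m, hm⟩ := hodd
    have hBcard : B.ncard = Nat.card G / 2 := by omega
    have hBspan : Spans B := spans_of_subset hA₀B hA₀
    exact ⟨B, hBspan,
      three_le_diamPlus hBspan (fun hu => hBmax.1 (hu ▸ Set.mem_univ g)), hBcard⟩

end Main

theorem stmt7 (G : Type*) [AddCommGroup G] [Finite G] (h : 3 ≤ diamAbs G) :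
    sSup {k : ℕ | ∃ A : Set G, Spans A ∧ 3 ≤ diamPlus A ∧ A.ncard = k} = Nat.card G / 2 ∧
      ∀ A : Set G, Nat.card G < 2 * A.ncard → iterSum (insert 0 A) 2 = Set.univ := by
  obtain ⟨A₀, hA₀, hd3⟩ : ∃ A : Set G, Spans A ∧ 3 ≤ diamPlus A := by
    set D := {d : ℕ | ∃ A : Set G, Spans A ∧ diamPlus A = d} with hD
    have hne : D.Nonempty := by
      by_contra hne
      rw [Set.not_nonempty_iff_eq_empty] at hne
      have : diamAbs G = 0 := by
        unfold diamAbs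
        rw [← hD, hne]
        exact csSup_empty
      omega
    obtain ⟨d, ⟨A, hA, hdA⟩, hdd⟩ : ∃ d ∈ D, 3 ≤ d := by
      by_contra hc
      push_neg at hc
      have : diamAbs G ≤ 2 := by
        unfold diamAbs
        rw [← hD]
        exact csSup_le hne (fun d hd => by have := hc d hd; omega)
      omega
    exact ⟨A, hA, hdA ▸ hdd⟩
  have h2 : iterSum (insert (0:G) A₀) 2 ≠ Set.univ := by
    intro hu
    have := diamPlus_le_two hu
    omega
  obtain ⟨B, hBs, hB3, hBc⟩ := exists_good hA₀ h2
  have hub : ∀ k ∈ {k : ℕ | ∃ A : Set G, Spans A ∧ 3 ≤ diamPlus A ∧ A.ncard = k},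
      k ≤ Nat.card G / 2 := by
    rintro k ⟨A, hAs, hA3, rfl⟩
    have hle : 2 * A.ncard ≤ Nat.card G := by
      by_contra hc
      push_neg at hc
      have := diamPlus_le_two (iterSum_two_univ_of_large A hc)
      omega
    omega
  constructor
  · apply le_antisymm
    · exact csSup_le ⟨_, B, hBs, hB3, hBc⟩ hub
    · exact le_csSup ⟨Nat.card G / 2, hub⟩ ⟨B, hBs, hB3, hBc⟩
  · exact fun A hA => iterSum_two_univ_of_large A hA
end

section
/- Let G be a finite abelian group, ρ ∈ [2, diam^+(G)], and let A be a ρ-maximal subset of G. Then for every τ ∈ [1, ρ-1], the period of the τ-fold sumset of A ∪ {0} equals the period of A, i.e. π(A) = π(τ·A_0). -/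
open Pointwise

variable {G : Type*}

section Aux
variable [AddCommGroup G]

lemma zero_mem_iterSum {A : Set G} (h0 : 0 ∈ A) : ∀ n, 0 ∈ iterSum A n
  | 0 => rfl
  | n + 1 => by
      have := zero_mem_iterSum h0 n
      simpa [iterSum] using Set.add_mem_add this h0

lemma iterSum_period_of_ge {A : Set G} {g : G} {τ n : ℕ}
    (h : iterSum A τ + {g} = iterSum A τ) (hn : τ ≤ n) :
    iterSum A n + {g} = iterSum A n := by
  induction n, hn using Nat.le_induction with
  | base => exact h
  | succ n hn ih =>
      show iterSum A n + A + {g} = iterSum A n + A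
      rw [add_right_comm, ih]

lemma iterSum_period_smul {A : Set G} {g : G} {n : ℕ}
    (h : iterSum A n + {g} = iterSum A n) (k : ℕ) :
    iterSum A n + {k • g} = iterSum A n := by
  induction k with
  | zero => simp
  | succ k ih =>
      have : ({(k + 1) • g} : Set G) = {k • g} + {g} := by
        rw [Set.singleton_add_singleton, succ_nsmul]
      rw [this, ← add_assoc, ih, h]

lemma zero_mem_of_rhoMax {ρ : ℕ} {A : Set G} (hA : RhoMax ρ A) : 0 ∈ A := by
  have := hA.2 (insert 0 A) (Set.subset_insert _ _) (by rw [Set.insert_idem]; exact hA.1)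
  rw [← this]; exact Set.mem_insert _ _

end Aux

theorem stmt13 (G : Type*) [AddCommGroup G] [Finite G] (ρ : ℕ) (hρ2 : 2 ≤ ρ)
    (hρd : ρ ≤ diamAbs G) (A : Set G) (hA : RhoMax ρ A)
    (τ : ℕ) (hτ1 : 1 ≤ τ) (hτ : τ ≤ ρ - 1) :
    {g : G | A + {g} = A} =
      {g : G | iterSum (insert 0 A) τ + {g} = iterSum (insert 0 A) τ} := by
  have h0 : (0 : G) ∈ A := zero_mem_of_rhoMax hA
  have hins : insert (0 : G) A = A := Set.insert_eq_self.mpr h0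
  rw [hins]
  ext g
  simp only [Set.mem_setOf_eq]
  constructor
  · intro hg
    have base : iterSum A 1 + {g} = iterSum A 1 := by
      show iterSum A 0 + A + {g} = iterSum A 0 + A
      rw [add_assoc, hg]
    exact iterSum_period_of_ge base hτ1
  · intro hg
    set B : Set G := A ∪ (A + {g}) with hB
    have key : ∀ n, ∀ y ∈ iterSum B n, ∃ x ∈ iterSum A n, ∃ k : ℕ, y = x + k • g := by
      intro n
      induction n with
      | zero => intro y hy; exact ⟨y, hy, 0, by simp⟩
      | succ n ih =>
          rintro y hy
          rcases Set.mem_add.mp hy with ⟨x, hx, b, hb, rfl⟩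
          rcases ih x hx with ⟨x', hx', k, rfl⟩
          rcases hb with hb | hb
          · exact ⟨x' + b, Set.add_mem_add hx' hb, k, by abel⟩
          · rcases Set.mem_add.mp hb with ⟨a, ha, g', hg', rfl⟩
            rcases hg' with rfl
            exact ⟨x' + a, Set.add_mem_add hx' ha, k + 1, by
              rw [add_nsmul, one_nsmul]; abel⟩
    have hper : iterSum A (ρ - 1) + {g} = iterSum A (ρ - 1) :=
      iterSum_period_of_ge hg hτ
    have hsub : iterSum B (ρ - 1) ⊆ iterSum A (ρ - 1) := by
      intro y hy
      rcases key (ρ - 1) y hy with ⟨x, hx, k, rfl⟩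
      have := iterSum_period_smul hper k
      rw [← this]
      exact Set.add_mem_add hx rfl
    have hBA : B = A := by
      apply hA.2 B Set.subset_union_left
      have h0B : insert (0 : G) B = B :=
        Set.insert_eq_self.mpr (Or.inl h0)
      rw [h0B]
      intro hu
      apply hA.1
      rw [hins]
      exact Set.eq_univ_of_univ_subset (hu ▸ hsub)
    have hsub2 : A + {g} ⊆ A := by
      have h' : A + {g} ⊆ A ∪ (A + {g}) := Set.subset_union_right
      rwa [← hB, hBA] at h'
    have hfin : A.Finite := Set.toFinite A
    have hcard : A.ncard ≤ (A + {g}).ncard := by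
      rw [Set.add_singleton, Set.ncard_image_of_injective _ (add_left_injective g)]
    exact Set.eq_of_subset_of_ncard_le hsub2 hcard hfin
end
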